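/- Assume e_i ≠ e_n for every i < n. Let A be the (n−1)×n matrix with entries A_{i,j} = e_i − e_n if j = i, A_{i,j} = c_{j,i} if j > i, and A_{i,j} = 0 if j < i (rows i = 1,…,n−1, columns j = 1,…,n), and set W := (−1)^{n−1}·∏_{i=1}^{n−1}(e_i − e_n)^{−1}. Then the vector P := W·∑_{k=1}^{n} (−1)^{1+k}·det(A^{(k)})·m_k, where A^{(k)} denotes A with its k-th column deleted (this is the Laplace expansion along the first row of the determinant whose first row is (m_1,…,m_n) and whose remaining rows form A), satisfies H(P) = e_n·P, and the coefficient of m_n in P equals 1, i.e., P = m_n + ∑_{k=1}^{n−1} (W·(−1)^{1+k}·det(A^{(k)}))·m_k. -/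

import Mathlib

lemma row_exp {K : Type*} [Field K] {n : ℕ} (A : Matrix (Fin n) (Fin (n+1)) K) (r : Fin n) :
    ∑ k : Fin (n+1), A r k * ((-1:K)^(k:ℕ) * (A.submatrix id k.succAbove).det) = 0 := by
  have h0 : (Matrix.of (Fin.cons (A r) A) : Matrix (Fin (n+1)) (Fin (n+1)) K).det = 0 :=
    Matrix.det_zero_of_row_eq (i := 0) (j := r.succ) (Fin.succ_ne_zero r).symm rfl
  rw [Matrix.det_succ_row_zero] at h0
  rw [← h0]
  refine Finset.sum_congr rfl fun k _ => ?_
  have hsub : (Matrix.of (Fin.cons (A r) A) : Matrix (Fin (n+1)) (Fin (n+1)) K).submatrix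
      Fin.succ k.succAbove = A.submatrix id k.succAbove := by
    ext i j; simp [Matrix.submatrix]; rfl
  rw [hsub]
  simp [Matrix.of_apply]
  change A r k * (_ * _) = _ * A r k * _
  ring

/-- determinantal formula, Theorem 1 of the paper.
`H` acts triangularly on `m_0, …, m_n` (indices `Fin (n+1)`).  With
`A` the `n × (n+1)` matrix whose row `i` has `e i - e last` on the diagonal,
`c j i` to the right of it and `0` to the left, and
`W := (-1)^n ∏ (e i - e last)⁻¹`, the vector
`P := W • ∑_k (-1)^k det(A with column k deleted) • m k`
(the Laplace expansion along the first row) is an eigenvector of `H` with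
eigenvalue `e last`, and the coefficient of `m last` in `P` equals `1`. -/
theorem determinantal_eigenvector
    (K : Type*) [Field K] (V : Type*) [AddCommGroup V] [Module K V]
    (n : ℕ) (m : Fin (n + 1) → V) (e : Fin (n + 1) → K)
    (c : Fin (n + 1) → Fin (n + 1) → K) (H : V →ₗ[K] V)
    (htri : ∀ j : Fin (n + 1),
      H (m j) = e j • m j + ∑ i ∈ Finset.Iio j, c j i • m i)
    (hne : ∀ i : Fin n, e i.castSucc ≠ e (Fin.last n))
    (A : Matrix (Fin n) (Fin (n + 1)) K)
    (hA : ∀ (i : Fin n) (j : Fin (n + 1)),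
      A i j = if j = i.castSucc then e i.castSucc - e (Fin.last n)
        else if i.castSucc < j then c j i.castSucc else 0)
    (W : K) (hW : W = (-1 : K) ^ n * ∏ i : Fin n, (e i.castSucc - e (Fin.last n))⁻¹)
    (P : V)
    (hP : P = W • ∑ k : Fin (n + 1),
      ((-1 : K) ^ (k : ℕ) * (A.submatrix id k.succAbove).det) • m k) :
    H P = e (Fin.last n) • P ∧
      P = m (Fin.last n) + ∑ k : Fin n,
        (W * (-1 : K) ^ (k : ℕ) * (A.submatrix id k.castSucc.succAbove).det) • m k.castSucc := by
  set d : Fin (n+1) → K := fun k => (-1:K)^(k:ℕ) * (A.submatrix id k.succAbove).det with hd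
  -- key per-index identity
  have key : ∀ k : Fin (n+1),
      d k * e k + ∑ j ∈ Finset.Ioi k, c j k * d j = e (Fin.last n) * d k := by
    intro k
    induction k using Fin.lastCases with
    | last =>
        have hIoi : Finset.Ioi (Fin.last n) = ∅ := by
          ext j; simp [Fin.lt_iff_val_lt_val, Fin.le_last, Nat.lt_irrefl,
            (Fin.le_last j).not_gt, Fin.is_le]
        rw [hIoi]
        simp [mul_comm]
    | cast i =>
        have h0 := row_exp A i
        have hsplit : ∑ k : Fin (n+1), A i k * d k
            = (e i.castSucc - e (Fin.last n)) * d i.castSucc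
              + ∑ j ∈ Finset.Ioi i.castSucc, c j i.castSucc * d j := by
          have hterm : ∀ k : Fin (n+1), A i k * d k =
              (if k = i.castSucc then (e i.castSucc - e (Fin.last n)) * d i.castSucc else 0)
              + (if k ∈ Finset.Ioi i.castSucc then c k i.castSucc * d k else 0) := by
            intro k
            rw [hA]
            rcases lt_trichotomy k i.castSucc with h | h | h
            · simp [h.ne, h.asymm, Finset.mem_Ioi, h.not_gt]
            · simp [h, Finset.mem_Ioi]
            · simp [h.ne', h, Finset.mem_Ioi]
          rw [Finset.sum_congr rfl fun k _ => hterm k, Finset.sum_add_distrib,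
            Finset.sum_ite_eq' Finset.univ, Finset.sum_ite_mem, Finset.univ_inter]
          simp
        have hz : (e i.castSucc - e (Fin.last n)) * d i.castSucc
            + ∑ j ∈ Finset.Ioi i.castSucc, c j i.castSucc * d j = 0 := by
          rw [← hsplit]; exact h0
        linear_combination hz
  -- coefficients at the last index
  have hdlast : d (Fin.last n) = (-1:K)^n * ∏ i : Fin n, (e i.castSucc - e (Fin.last n)) := by
    have hsub : (A.submatrix id (Fin.last n).succAbove).det
        = ∏ i : Fin n, (e i.castSucc - e (Fin.last n)) := by
      have htr : (A.submatrix id (Fin.last n).succAbove).BlockTriangular id := by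
        intro p q hpq
        simp only [Matrix.submatrix_apply, id_eq, Fin.succAbove_last, hA]
        have h1 : (q : Fin n).castSucc ≠ (p : Fin n).castSucc := by
          simp only [ne_eq, Fin.castSucc_inj]; exact ne_of_lt hpq
        rw [if_neg h1, if_neg]
        simp only [Fin.castSucc_lt_castSucc_iff, not_lt]
        exact le_of_lt hpq
      rw [Matrix.det_of_upperTriangular htr]
      refine Finset.prod_congr rfl fun i _ => ?_
      simp [hA]
    simp only [hd, hsub, Fin.val_last]
  have hWd : W * d (Fin.last n) = 1 := by
    rw [hW, hdlast, mul_mul_mul_comm, ← pow_add]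
    have h1 : ((-1:K)) ^ (n + n) = 1 := Even.neg_one_pow ⟨n, rfl⟩
    rw [h1, one_mul, ← Finset.prod_mul_distrib]
    exact Finset.prod_eq_one fun i _ => inv_mul_cancel₀ (sub_ne_zero.mpr (hne i))
  -- second part
  have hP2 : P = m (Fin.last n) + ∑ k : Fin n,
      (W * (-1 : K) ^ (k : ℕ) * (A.submatrix id k.castSucc.succAbove).det) • m k.castSucc := by
    rw [hP, Finset.smul_sum, Fin.sum_univ_castSucc]
    simp only [smul_smul]
    rw [hWd, one_smul, add_comm]
    congr 1
    refine Finset.sum_congr rfl fun k _ => ?_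
    simp [hd, mul_assoc]
  refine ⟨?_, hP2⟩
  -- first part
  rw [hP, map_smul, map_sum, smul_comm (e (Fin.last n)) W]
  congr 1
  simp only [map_smul, htri]
  rw [Finset.smul_sum]
  calc ∑ k : Fin (n+1), d k • (e k • m k + ∑ i ∈ Finset.Iio k, c k i • m i)
      = ∑ k : Fin (n+1), ((d k * e k) • m k + ∑ i ∈ Finset.Iio k, (c k i * d k) • m i) := by
        refine Finset.sum_congr rfl fun k _ => ?_
        rw [smul_add, smul_smul, Finset.smul_sum]
        congr 1
        refine Finset.sum_congr rfl fun i _ => ?_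
        rw [smul_smul, mul_comm]
    _ = ∑ k : Fin (n+1), (d k * e k) • m k
          + ∑ k : Fin (n+1), ∑ i ∈ Finset.Iio k, (c k i * d k) • m i := by
        rw [Finset.sum_add_distrib]
    _ = ∑ k : Fin (n+1), (d k * e k) • m k
          + ∑ i : Fin (n+1), ∑ k ∈ Finset.Ioi i, (c k i * d k) • m i := by
        congr 1
        exact Finset.sum_comm' fun k i => by
          simp [Finset.mem_Iio, Finset.mem_Ioi]
    _ = ∑ k : Fin (n+1), ((d k * e k) + ∑ j ∈ Finset.Ioi k, c j k * d j) • m k := by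
        rw [← Finset.sum_add_distrib]
        refine Finset.sum_congr rfl fun k _ => ?_
        rw [add_smul, Finset.sum_smul]
    _ = ∑ k : Fin (n+1), e (Fin.last n) • d k • m k := by
        refine Finset.sum_congr rfl fun k _ => ?_
        rw [key k, smul_smul]
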